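/- arXiv:math/0305336 — 2 statements merged into one kernel-verified Lean document; each statement's English description precedes it below -/
import Mathlib

section
/- Let 𝒜 be a central hyperplane arrangement of rank d ≥ 2 in ℝⁿ admitting a partition 𝒜 = 𝒜₀ ⊎ 𝒜₁ where 𝒜₀ has rank d−1 and for any H′,H″ ∈ 𝒜₁ there is a unique H ∈ 𝒜₀ with H′ ∩ H″ ⊆ H. Let D be the one-dimensional subspace (∩𝒜₀) ∩ Span(𝒜). Then no hyperplane H ∈ 𝒜₁ contains D. -/
open scoped RealInnerProductSpace

noncomputable section

variable {n : ℕ}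

/-- A (linear) hyperplane in ℝⁿ: the zero set of a nonzero linear functional,
expressed via the inner product with a nonzero normal vector. -/
def IsHyperplane (H : Set (EuclideanSpace ℝ (Fin n))) : Prop :=
  ∃ v : EuclideanSpace ℝ (Fin n), v ≠ 0 ∧ H = {x | ⟪v, x⟫ = 0}

/-- A central hyperplane arrangement: a finite nonempty collection of linear hyperplanes. -/
def IsCentralArrangement (A : Set (Set (EuclideanSpace ℝ (Fin n)))) : Prop :=
  A.Finite ∧ A.Nonempty ∧ ∀ H ∈ A, IsHyperplane H

/-- The complement of the union of the hyperplanes of the arrangement. -/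
def arrComplement (A : Set (Set (EuclideanSpace ℝ (Fin n)))) : Set (EuclideanSpace ℝ (Fin n)) :=
  (⋃ H ∈ A, H)ᶜ

/-- A region of the arrangement: the closure of a connected component of the complement
of the union of the hyperplanes. -/
def IsRegion (A : Set (Set (EuclideanSpace ℝ (Fin n)))) (R : Set (EuclideanSpace ℝ (Fin n))) :
    Prop :=
  ∃ x ∈ arrComplement A, R = closure (connectedComponentIn (arrComplement A) x)

/-- The hyperplane `H` separates the region `R` from the region `B`: their interiors lie on
strictly opposite sides of `H`. -/
def Separates (H R B : Set (EuclideanSpace ℝ (Fin n))) : Prop :=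
  ∃ v : EuclideanSpace ℝ (Fin n), v ≠ 0 ∧ H = {x | ⟪v, x⟫ = 0} ∧
    (∀ x ∈ interior R, 0 < ⟪v, x⟫) ∧ (∀ x ∈ interior B, ⟪v, x⟫ < 0)

/-- S(R): the set of hyperplanes of `A` separating `R` from the base region `B`. -/
def sepSet (A : Set (Set (EuclideanSpace ℝ (Fin n)))) (B R : Set (EuclideanSpace ℝ (Fin n))) :
    Set (Set (EuclideanSpace ℝ (Fin n))) :=
  {H | H ∈ A ∧ Separates H R B}

/-- The order of the poset of regions 𝒫(𝒜,B): containment of separating sets. -/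
def regLE (A : Set (Set (EuclideanSpace ℝ (Fin n)))) (B R₁ R₂ : Set (EuclideanSpace ℝ (Fin n))) :
    Prop :=
  sepSet A B R₁ ⊆ sepSet A B R₂

/-- Strict order on regions. -/
def regLT (A : Set (Set (EuclideanSpace ℝ (Fin n)))) (B R₁ R₂ : Set (EuclideanSpace ℝ (Fin n))) :
    Prop :=
  regLE A B R₁ R₂ ∧ ¬ regLE A B R₂ R₁

/-- The order dimension of the poset of regions 𝒫(𝒜,B): the smallest `d` such that it embeds
as an induced subposet of ℝᵈ with the componentwise order. -/
def regionOrderDim (A : Set (Set (EuclideanSpace ℝ (Fin n))))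
    (B : Set (EuclideanSpace ℝ (Fin n))) : ℕ :=
  sInf {d : ℕ | ∃ f : {R : Set (EuclideanSpace ℝ (Fin n)) // IsRegion A R} → (Fin d → ℝ),
    ∀ R₁ R₂, regLE A B R₁.1 R₂.1 ↔ ∀ i, f R₁ i ≤ f R₂ i}

/-- The rank-two subarrangement of `A` consisting of all hyperplanes of `A`
containing `H₁ ∩ H₂`. -/
def pencil (A : Set (Set (EuclideanSpace ℝ (Fin n)))) (H₁ H₂ : Set (EuclideanSpace ℝ (Fin n))) :
    Set (Set (EuclideanSpace ℝ (Fin n))) :=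
  {H | H ∈ A ∧ H₁ ∩ H₂ ⊆ H}

/-- `H` is basic in the subarrangement `A'` relative to the base region `B`:
`H ∈ A'` and `H` bounds (meets in codimension one) the region `B'` of `A'` containing `B`. -/
def IsBasicIn (A' : Set (Set (EuclideanSpace ℝ (Fin n)))) (B H : Set (EuclideanSpace ℝ (Fin n))) :
    Prop :=
  H ∈ A' ∧ ∃ B', IsRegion A' B' ∧ B ⊆ B' ∧
    Submodule.span ℝ (H ∩ B') = Submodule.span ℝ H

/-- The edge relation of the basic digraph 𝒟(𝒜,B): `H₁ → H₂` whenever `H₁` is basic in the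
rank-two subarrangement consisting of all hyperplanes of `A` containing `H₁ ∩ H₂`. -/
def BasicEdge (A : Set (Set (EuclideanSpace ℝ (Fin n))))
    (B H₁ H₂ : Set (EuclideanSpace ℝ (Fin n))) : Prop :=
  H₁ ∈ A ∧ H₂ ∈ A ∧ H₁ ≠ H₂ ∧ IsBasicIn (pencil A H₁ H₂) B H₁

/-- Span(𝒜): the linear span of the normal vectors of the hyperplanes of `A`,
i.e. the orthogonal complement of the intersection of the hyperplanes. -/
def arrSpan (A : Set (Set (EuclideanSpace ℝ (Fin n)))) :
    Submodule ℝ (EuclideanSpace ℝ (Fin n)) :=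
  (Submodule.span ℝ (⋂₀ A))ᗮ

/-- The rank of the arrangement `A`: the dimension of the span of its normal vectors. -/
def arrRank (A : Set (Set (EuclideanSpace ℝ (Fin n)))) : ℕ :=
  Module.finrank ℝ (arrSpan A)

/-- Supersolvability of a central arrangement: every arrangement of rank at most 2 is
supersolvable, and an arrangement of higher rank is supersolvable iff it admits a
partition `A = A₀ ⊎ A₁` with `A₀` supersolvable of rank one less, such that any two
distinct hyperplanes of `A₁` have their intersection inside a unique hyperplane of `A₀`. -/
inductive IsSupersolvable : Set (Set (EuclideanSpace ℝ (Fin n))) → Prop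
  | low : ∀ A : Set (Set (EuclideanSpace ℝ (Fin n))), arrRank A ≤ 2 → IsSupersolvable A
  | step : ∀ A A₀ A₁ : Set (Set (EuclideanSpace ℝ (Fin n))),
      A = A₀ ∪ A₁ → Disjoint A₀ A₁ →
      arrRank A₀ + 1 = arrRank A →
      (∀ H' ∈ A₁, ∀ H'' ∈ A₁, H' ≠ H'' → ∃! H, H ∈ A₀ ∧ H' ∩ H'' ⊆ H) →
      IsSupersolvable A₀ → IsSupersolvable A

/-- `B` is a canonical base region of the supersolvable arrangement `A`:
any region works in rank at most 2; in higher rank, the region `B₀` of `A₀` containing `B`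
is a canonical base region of `A₀` and the regions of `A` contained in `B₀` are linearly
ordered in 𝒫(𝒜,B). -/
inductive IsCanonicalBase :
    Set (Set (EuclideanSpace ℝ (Fin n))) → Set (EuclideanSpace ℝ (Fin n)) → Prop
  | low : ∀ (A : Set (Set (EuclideanSpace ℝ (Fin n)))) (B : Set (EuclideanSpace ℝ (Fin n))),
      arrRank A ≤ 2 → IsRegion A B → IsCanonicalBase A B
  | step : ∀ (A A₀ A₁ : Set (Set (EuclideanSpace ℝ (Fin n))))
      (B B₀ : Set (EuclideanSpace ℝ (Fin n))),
      A = A₀ ∪ A₁ → Disjoint A₀ A₁ →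
      arrRank A₀ + 1 = arrRank A →
      (∀ H' ∈ A₁, ∀ H'' ∈ A₁, H' ≠ H'' → ∃! H, H ∈ A₀ ∧ H' ∩ H'' ⊆ H) →
      IsRegion A B → IsRegion A₀ B₀ → B ⊆ B₀ →
      IsCanonicalBase A₀ B₀ →
      (∀ R R', IsRegion A R → IsRegion A R' → R ⊆ B₀ → R' ⊆ B₀ →
        regLE A B R R' ∨ regLE A B R' R) →
      IsCanonicalBase A B

private lemma hyperplane_eq_coe {v : EuclideanSpace ℝ (Fin n)} :
    {x : EuclideanSpace ℝ (Fin n) | ⟪v, x⟫ = 0} = ((ℝ ∙ v)ᗮ : Set (EuclideanSpace ℝ (Fin n))) := by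
  ext x
  simp [Submodule.mem_orthogonal_singleton_iff_inner_right]

private lemma span_sInter_eq (S : Set (Set (EuclideanSpace ℝ (Fin n))))
    (h : ∀ H ∈ S, IsHyperplane H) :
    (Submodule.span ℝ (⋂₀ S) : Set (EuclideanSpace ℝ (Fin n))) = ⋂₀ S := by
  classical
  have hsub : ∀ H : S, ∃ p : Submodule ℝ (EuclideanSpace ℝ (Fin n)),
      (p : Set (EuclideanSpace ℝ (Fin n))) = (H : Set (EuclideanSpace ℝ (Fin n))) := by
    rintro ⟨H, hH⟩
    obtain ⟨v, hv0, rfl⟩ := h H hH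
    exact ⟨(ℝ ∙ v)ᗮ, hyperplane_eq_coe.symm⟩
  choose p hp using hsub
  have hS : ⋂₀ S = ↑(⨅ H : S, p H) := by
    ext x
    rw [SetLike.mem_coe, Submodule.mem_iInf, Set.mem_sInter]
    constructor
    · intro hx H
      have : x ∈ (p H : Set (EuclideanSpace ℝ (Fin n))) := by rw [hp H]; exact hx H H.2
      exact this
    · intro hx H hH
      have : x ∈ (p ⟨H, hH⟩ : Set (EuclideanSpace ℝ (Fin n))) := hx ⟨H, hH⟩
      rwa [hp ⟨H, hH⟩] at this
  rw [hS, Submodule.span_eq]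

/-- **Lemma (Reading, Lemma 20).** Let `A` be a central arrangement of rank `d ≥ 2` admitting
a partition `A = A₀ ⊎ A₁` where `A₀` has rank `d − 1` and any two distinct hyperplanes of
`A₁` have their intersection inside a unique hyperplane of `A₀`.  Let `D` be the
one-dimensional subspace `(⋂₀ A₀) ∩ Span(A)`.  Then no hyperplane of `A₁` contains `D`. -/
theorem no_hyperplane_contains_D {n d : ℕ} (hd : 2 ≤ d)
    (A A₀ A₁ : Set (Set (EuclideanSpace ℝ (Fin n))))
    (hA : IsCentralArrangement A) (hrank : arrRank A = d)
    (hpart : A = A₀ ∪ A₁) (hdisj : Disjoint A₀ A₁)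
    (hrank₀ : arrRank A₀ = d - 1)
    (hmod : ∀ H' ∈ A₁, ∀ H'' ∈ A₁, H' ≠ H'' → ∃! H, H ∈ A₀ ∧ H' ∩ H'' ⊆ H) :
    ∀ H ∈ A₁, ¬ (⋂₀ A₀ ∩ (arrSpan A : Set (EuclideanSpace ℝ (Fin n)))) ⊆ H := by
  classical
  intro H' hH'A₁ hcon
  obtain ⟨hfin, hAne, hhyp⟩ := hA
  have hhyp₀ : ∀ H ∈ A₀, IsHyperplane H := fun H hH => hhyp H (hpart ▸ Or.inl hH)
  set M₀ : Submodule ℝ (EuclideanSpace ℝ (Fin n)) := Submodule.span ℝ (⋂₀ A₀) with hM₀def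
  set M : Submodule ℝ (EuclideanSpace ℝ (Fin n)) := Submodule.span ℝ (⋂₀ A) with hMdef
  have hM₀c : (M₀ : Set (EuclideanSpace ℝ (Fin n))) = ⋂₀ A₀ := span_sInter_eq A₀ hhyp₀
  have hMc : (M : Set (EuclideanSpace ℝ (Fin n))) = ⋂₀ A := span_sInter_eq A hhyp
  have hn : Module.finrank ℝ (EuclideanSpace ℝ (Fin n)) = n := finrank_euclideanSpace_fin
  have hr₀ : Module.finrank ℝ M₀ᗮ = d - 1 := hrank₀
  have hr : Module.finrank ℝ Mᗮ = d := hrank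
  -- D = M₀ ⊓ Mᗮ is nonzero
  have e0 : Module.finrank ℝ M₀ + Module.finrank ℝ M₀ᗮ = n := by
    rw [M₀.finrank_add_finrank_orthogonal, hn]
  have hsum := Submodule.finrank_sup_add_finrank_inf_eq M₀ Mᗮ
  have hle : Module.finrank ℝ ↥(M₀ ⊔ Mᗮ) ≤ n := by
    have := Submodule.finrank_le (M₀ ⊔ Mᗮ)
    rwa [hn] at this
  have hd1 : 1 ≤ Module.finrank ℝ ↥(M₀ ⊓ Mᗮ) := by omega
  have hDne : (M₀ ⊓ Mᗮ) ≠ ⊥ := by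
    intro h
    rw [h, finrank_bot] at hd1
    omega
  obtain ⟨x₀, hx₀mem, hx₀ne⟩ := Submodule.ne_bot_iff _ |>.mp hDne
  obtain ⟨hx₀M₀, hx₀S⟩ := hx₀mem
  have hx₀A₀ : ∀ H ∈ A₀, x₀ ∈ H := by
    have : x₀ ∈ ⋂₀ A₀ := hM₀c ▸ hx₀M₀
    exact fun H hH => this H hH
  have hx₀H' : x₀ ∈ H' := hcon ⟨hM₀c ▸ hx₀M₀, hx₀S⟩
  -- find H'' ∈ A₁ not containing x₀
  have hex : ∃ H'' ∈ A₁, x₀ ∉ H'' := by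
    by_contra hno
    push_neg at hno
    have hxA : x₀ ∈ ⋂₀ A := by
      intro H hH
      rcases (hpart ▸ hH : H ∈ A₀ ∪ A₁) with h | h
      exacts [hx₀A₀ H h, hno H h]
    have hxM : x₀ ∈ M := by
      have : x₀ ∈ (M : Set (EuclideanSpace ℝ (Fin n))) := by rw [hMc]; exact hxA
      exact this
    exact hx₀ne (inner_self_eq_zero.mp (Submodule.mem_orthogonal M x₀ |>.mp hx₀S x₀ hxM))
  obtain ⟨H'', hH''A₁, hx₀nH''⟩ := hex
  have hne' : H' ≠ H'' := fun h => hx₀nH'' (h ▸ hx₀H')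
  obtain ⟨H, ⟨hHA₀, hHsub⟩, -⟩ := hmod H' hH'A₁ H'' hH''A₁ hne'
  obtain ⟨v', hv'0, hH'eq⟩ := hhyp H' (hpart ▸ Or.inr hH'A₁)
  obtain ⟨v'', hv''0, hH''eq⟩ := hhyp H'' (hpart ▸ Or.inr hH''A₁)
  obtain ⟨u, hu0, hHeq⟩ := hhyp₀ H hHA₀
  -- u lies in span {v', v''}
  have hsubmod : ((ℝ ∙ v')ᗮ ⊓ (ℝ ∙ v'')ᗮ : Submodule ℝ (EuclideanSpace ℝ (Fin n))) ≤ (ℝ ∙ u)ᗮ := by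
    intro x hx
    have hx' : x ∈ H' ∩ H'' := by
      constructor
      · rw [hH'eq, hyperplane_eq_coe]; exact hx.1
      · rw [hH''eq, hyperplane_eq_coe]; exact hx.2
    have := hHsub hx'
    rw [hHeq, hyperplane_eq_coe] at this
    exact this
  have humem : u ∈ (ℝ ∙ v') ⊔ (ℝ ∙ v'') := by
    have h2 : ((ℝ ∙ v') ⊔ (ℝ ∙ v''))ᗮ ≤ (ℝ ∙ u)ᗮ := by
      rw [← Submodule.inf_orthogonal]; exact hsubmod
    have h3 := Submodule.orthogonal_le h2
    rw [Submodule.orthogonal_orthogonal, Submodule.orthogonal_orthogonal] at h3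
    exact h3 (Submodule.mem_span_singleton_self u)
  rw [← Submodule.span_union, Set.singleton_union] at humem
  obtain ⟨a, b, hab⟩ := Submodule.mem_span_pair.mp humem
  have hx₀v' : ⟪v', x₀⟫ = 0 := by
    have := hx₀H'; rw [hH'eq] at this; exact this
  have hx₀u : ⟪u, x₀⟫ = 0 := by
    have := hx₀A₀ H hHA₀; rw [hHeq] at this; exact this
  have hx₀v'' : ⟪v'', x₀⟫ ≠ 0 := fun h => hx₀nH'' (by rw [hH''eq]; exact h)
  have hb : b = 0 := by
    have h0 : ⟪a • v' + b • v'', x₀⟫ = 0 := by rw [hab]; exact hx₀u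
    rw [inner_add_left, real_inner_smul_left, real_inner_smul_left, hx₀v', mul_zero,
      zero_add] at h0
    exact (mul_eq_zero.mp h0).resolve_right hx₀v''
  have hua : u = a • v' := by rw [← hab, hb, zero_smul, add_zero]
  have ha : a ≠ 0 := by
    intro h
    apply hu0
    rw [hua, h, zero_smul]
  have hHH' : H = H' := by
    rw [hHeq, hH'eq]
    ext x
    simp only [Set.mem_setOf_eq]
    rw [hua, real_inner_smul_left]
    constructor
    · intro h; exact (mul_eq_zero.mp h).resolve_left ha
    · intro h; rw [h, mul_zero]
  exact Set.disjoint_left.mp hdisj hHA₀ (hHH' ▸ hH'A₁)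
end
end

section
/- Let 𝒜 = 𝒜₀ ⊎ 𝒜₁ be a supersolvable central hyperplane arrangement of rank d ≥ 2 in ℝⁿ (with 𝒜₀ supersolvable of rank d−1 and, for any H′,H″ ∈ 𝒜₁, a unique H ∈ 𝒜₀ with H′ ∩ H″ ⊆ H), and let B be a canonical base region. Then 𝒜₁ induces an acyclic sub-digraph of the basic digraph 𝒟(𝒜,B). -/
open scoped RealInnerProductSpace
open scoped Classical

noncomputable section

variable {n : ℕ}

local notation "E" => EuclideanSpace ℝ (Fin n)


lemma aux_parallel (v w : E) (hw : w ≠ 0)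
    (h : ∀ x : E, ⟪w, x⟫ = 0 → ⟪v, x⟫ = 0) : ∃ c : ℝ, v = c • w := by
  set c : ℝ := ⟪v, w⟫ / ⟪w, w⟫ with hc
  have hww : ⟪w, w⟫ ≠ 0 := fun h0 => hw (inner_self_eq_zero.mp h0)
  have hz1 : ⟪w, v - c • w⟫ = 0 := by
    rw [inner_sub_right, real_inner_smul_right, hc, real_inner_comm w v,
      div_mul_cancel₀ _ hww, sub_self]
  have hz2 : ⟪v, v - c • w⟫ = 0 := h _ hz1
  have hz : v - c • w = 0 := by
    have hq : ⟪v - c • w, v - c • w⟫ = (0:ℝ) := by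
      rw [inner_sub_left, real_inner_smul_left, hz1, hz2]
      ring
    exact inner_self_eq_zero.mp hq
  exact ⟨c, sub_eq_zero.mp hz⟩

lemma aux_span_pair (u v w : E)
    (h : ∀ x : E, ⟪v, x⟫ = 0 → ⟪w, x⟫ = 0 → ⟪u, x⟫ = 0) :
    ∃ a b : ℝ, u = a • v + b • w := by
  set K : Submodule ℝ E := Submodule.span ℝ {v, w} with hK
  obtain ⟨y, hy, z, hz, huyz⟩ := K.exists_add_mem_mem_orthogonal u
  have hvz : ⟪v, z⟫ = 0 :=
    (Submodule.mem_orthogonal K z).mp hz v (Submodule.subset_span (by simp))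
  have hwz : ⟪w, z⟫ = 0 :=
    (Submodule.mem_orthogonal K z).mp hz w (Submodule.subset_span (by simp))
  have huz : ⟪u, z⟫ = 0 := h z hvz hwz
  have hyz : ⟪y, z⟫ = 0 := (Submodule.mem_orthogonal K z).mp hz y hy
  have hz0 : z = 0 := by
    have : ⟪y + z, z⟫ = 0 := huyz ▸ huz
    rw [inner_add_left, hyz, zero_add] at this
    exact inner_self_eq_zero.mp this
  have : u ∈ K := by rw [huyz, hz0, add_zero]; exact hy
  obtain ⟨a, b, hab⟩ := Submodule.mem_span_pair.mp this
  exact ⟨a, b, hab.symm⟩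

lemma aux_gordan (S : Finset E) (h : ¬ ∃ x : E, ∀ z ∈ S, 0 < ⟪z, x⟫) :
    ∃ c : E → ℝ, (∀ z, 0 ≤ c z) ∧ (∑ z ∈ S, c z • z = 0) ∧ (∑ z ∈ S, c z = 1) := by
  have h0 : (0 : E) ∈ convexHull ℝ (S : Set E) := by
    by_contra h0
    obtain ⟨f, u, hfu, hu⟩ := geometric_hahn_banach_closed_point
      (convex_convexHull ℝ (S : Set E)) ((S.finite_toSet.isCompact_convexHull ℝ).isClosed) h0
    apply h
    refine ⟨-((InnerProductSpace.toDual ℝ E).symm f), fun z hz => ?_⟩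
    have hz' : f z < u := hfu z (subset_convexHull ℝ (S : Set E) hz)
    have hu0 : u < 0 := by simpa using hu
    have hfz : ⟪z, ((InnerProductSpace.toDual ℝ E).symm f)⟫ = f z := by
      rw [real_inner_comm]; exact InnerProductSpace.toDual_symm_apply
    rw [inner_neg_right, hfz]
    linarith
  obtain ⟨w, hw0, hw1, hwsum⟩ := Finset.mem_convexHull'.mp h0
  refine ⟨fun z => if z ∈ S then w z else 0, fun z => ?_, ?_, ?_⟩
  · by_cases hz : z ∈ S <;> simp [hz]
    exact hw0 z hz
  · rw [← hwsum]
    exact Finset.sum_congr rfl (fun z hz => by simp [hz])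
  · rw [← hw1]
    exact Finset.sum_congr rfl (fun z hz => by simp [hz])

lemma aux_generic (T : Finset E) (hT : ∀ v ∈ T, v ≠ (0:E)) (U : Set E) (hU : IsOpen U)
    (hne : U.Nonempty) : ∃ x ∈ U, ∀ v ∈ T, ⟪v, x⟫ ≠ 0 := by
  classical
  induction T using Finset.induction_on with
  | empty => obtain ⟨x, hx⟩ := hne; exact ⟨x, hx, by simp⟩
  | @insert v T hv ih =>
    obtain ⟨x, hxU, hx⟩ := ih (fun v hv => hT v (Finset.mem_insert_of_mem hv))
    have hv0 : v ≠ 0 := hT v (Finset.mem_insert_self v T)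
    set V : Set E := U ∩ ⋂ w ∈ T, {z | ⟪w, z⟫ ≠ 0} with hV
    have hVopen : IsOpen V := by
      apply hU.inter
      apply isOpen_biInter_finset
      intro w hw
      have hcont : Continuous fun z : E => ⟪w, z⟫ := continuous_const.inner continuous_id
      exact isOpen_compl_singleton.preimage hcont
    have hxV : x ∈ V := by
      refine ⟨hxU, ?_⟩
      simp only [Set.mem_iInter]
      intro w hw; exact hx w hw
    obtain ⟨ε, hε, hball⟩ := Metric.isOpen_iff.mp hVopen x hxV
    have hvnorm : 0 < ‖v‖ := norm_pos_iff.mpr hv0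
    by_cases hvx : ⟪v, x⟫ = 0
    · set δ : ℝ := ε / (2 * ‖v‖) with hδ
      have hδpos : 0 < δ := div_pos hε (by linarith)
      have hx' : x + δ • v ∈ V := by
        apply hball
        rw [Metric.mem_ball, dist_eq_norm, add_sub_cancel_left, norm_smul,
          Real.norm_eq_abs, abs_of_pos hδpos, hδ]
        rw [div_mul_eq_mul_div, mul_comm]
        rw [mul_div_assoc]
        calc ‖v‖ * (ε / (2 * ‖v‖)) = ε / 2 := by field_simp
        _ < ε := by linarith
      refine ⟨x + δ • v, hx'.1, fun w hw => ?_⟩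
      rcases Finset.mem_insert.mp hw with rfl | hw
      · rw [inner_add_right, hvx, real_inner_smul_right, zero_add]
        have hww : 0 < ⟪w, w⟫ :=
          lt_of_le_of_ne real_inner_self_nonneg (Ne.symm (inner_self_ne_zero.mpr hv0))
        positivity
      · have := hx'.2
        simp only [Set.mem_iInter] at this
        exact this w hw
    · refine ⟨x, hxU, fun w hw => ?_⟩
      rcases Finset.mem_insert.mp hw with rfl | hw
      · exact hvx
      · exact hx w hw

lemma aux_sign_neg {s : Set E} (hs : IsPreconnected s) (w : E)
    (hnz : ∀ z ∈ s, ⟪w, z⟫ ≠ 0) {x y : E} (hx : x ∈ s) (hy : y ∈ s)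
    (h : ⟪w, x⟫ < 0) : ⟪w, y⟫ < 0 := by
  by_contra hy'
  push_neg at hy'
  have hy'' : 0 < ⟪w, y⟫ := lt_of_le_of_ne hy' (Ne.symm (hnz y hy))
  have hcont : Continuous fun z : E => ⟪w, z⟫ := continuous_const.inner continuous_id
  have himg : IsPreconnected ((fun z : E => ⟪w, z⟫) '' s) :=
    hs.image _ hcont.continuousOn
  have h0 : (0:ℝ) ∈ (fun z : E => ⟪w, z⟫) '' s := by
    have := himg.Icc_subset (Set.mem_image_of_mem _ hx) (Set.mem_image_of_mem _ hy)
    exact this ⟨le_of_lt h, le_of_lt hy''⟩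
  obtain ⟨z, hz, hz0⟩ := h0
  exact hnz z hz hz0

lemma aux_interior_neg {C : Set E} (w : E) (hw : w ≠ 0)
    (hC : C ⊆ {z : E | ⟪w, z⟫ ≤ 0}) {z : E} (hz : z ∈ interior C) : ⟪w, z⟫ < 0 := by
  obtain ⟨ε, hε, hball⟩ := Metric.isOpen_iff.mp isOpen_interior z hz
  have hle : ⟪w, z⟫ ≤ 0 := hC (interior_subset hz)
  rcases lt_or_eq_of_le hle with h | h
  · exact h
  · exfalso
    have hwnorm : 0 < ‖w‖ := norm_pos_iff.mpr hw
    set δ : ℝ := ε / (2 * ‖w‖) with hδ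
    have hδpos : 0 < δ := div_pos hε (by linarith)
    have hmem : z + δ • w ∈ C := by
      apply interior_subset
      apply hball
      rw [Metric.mem_ball, dist_eq_norm, add_sub_cancel_left, norm_smul,
        Real.norm_eq_abs, abs_of_pos hδpos, hδ]
      rw [div_mul_eq_mul_div, mul_comm, mul_div_assoc]
      calc ‖w‖ * (ε / (2 * ‖w‖)) = ε / 2 := by field_simp
      _ < ε := by linarith
    have hble : ⟪w, z + δ • w⟫ ≤ 0 := hC hmem
    rw [inner_add_right, real_inner_smul_right] at hble
    have hww : 0 < ⟪w, w⟫ :=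
      lt_of_le_of_ne real_inner_self_nonneg (Ne.symm (inner_self_ne_zero.mpr hw))
    nlinarith

lemma aux_comp_eq {S : Set E} (hS : IsOpen S) {x y : E}
    (hy : y ∈ closure (connectedComponentIn S x)) (hyS : y ∈ S) :
    connectedComponentIn S y = connectedComponentIn S x := by
  have hopen : IsOpen (connectedComponentIn S y) := hS.connectedComponentIn
  have hmem : y ∈ connectedComponentIn S y := mem_connectedComponentIn hyS
  obtain ⟨z, hz1, hz2⟩ := mem_closure_iff.mp hy _ hopen hmem
  exact (connectedComponentIn_eq hz1).trans (connectedComponentIn_eq hz2).symm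


set_option maxHeartbeats 2000000

/-- **Proposition (Reading, Proposition 21).** Let `A = A₀ ⊎ A₁` be a supersolvable central
arrangement of rank `d ≥ 2` (with `A₀` supersolvable of rank `d − 1`, and any two distinct
hyperplanes of `A₁` having their intersection inside a unique hyperplane of `A₀`), and let
`B` be a canonical base region (so the region `B₀` of `A₀` containing `B` is a canonical
base region of `A₀`, and the regions of `A` contained in `B₀` are linearly ordered in
𝒫(𝒜,B)).  Then `A₁` induces an acyclic sub-digraph of the basic digraph 𝒟(𝒜,B). -/
theorem supersolvable_A₁_acyclic {n d : ℕ} (hd : 2 ≤ d)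
    (A A₀ A₁ : Set (Set (EuclideanSpace ℝ (Fin n))))
    (B B₀ : Set (EuclideanSpace ℝ (Fin n)))
    (hA : IsCentralArrangement A) (hrank : arrRank A = d)
    (hpart : A = A₀ ∪ A₁) (hdisj : Disjoint A₀ A₁)
    (hrank₀ : arrRank A₀ = d - 1) (hss₀ : IsSupersolvable A₀)
    (hmod : ∀ H' ∈ A₁, ∀ H'' ∈ A₁, H' ≠ H'' → ∃! H, H ∈ A₀ ∧ H' ∩ H'' ⊆ H)
    (hB : IsRegion A B) (hB₀ : IsRegion A₀ B₀) (hBB₀ : B ⊆ B₀)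
    (hcan₀ : IsCanonicalBase A₀ B₀)
    (hchain : ∀ R R', IsRegion A R → IsRegion A R' → R ⊆ B₀ → R' ⊆ B₀ →
      regLE A B R R' ∨ regLE A B R' R) :
    ∀ H, ¬ Relation.TransGen
      (fun H₁ H₂ => H₁ ∈ A₁ ∧ H₂ ∈ A₁ ∧ BasicEdge A B H₁ H₂) H H := by
  intro Hcyc hcyc
  obtain ⟨hAfin, hAne, hAhyp⟩ := hA
  obtain ⟨xB, hxB, hBdef⟩ := hB
  subst hBdef
  obtain ⟨x₀, hx₀, hB₀def⟩ := hB₀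
  subst hB₀def
  have hA₀A : A₀ ⊆ A := by rw [hpart]; exact Set.subset_union_left
  have hA₁A : A₁ ⊆ A := by rw [hpart]; exact Set.subset_union_right
  -- choose normals oriented positively at xB
  have hWex : ∀ H : Set (EuclideanSpace ℝ (Fin n)), ∃ w : (EuclideanSpace ℝ (Fin n)),
      H ∈ A → (w ≠ 0 ∧ H = {x : (EuclideanSpace ℝ (Fin n)) | ⟪w, x⟫ = 0} ∧ 0 < ⟪w, xB⟫) := by
    intro H
    by_cases hH : H ∈ A
    · obtain ⟨v, hv, hvH⟩ := hAhyp H hH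
      have hxBH : xB ∉ H := fun hmem => hxB (Set.mem_biUnion hH hmem)
      have hvxB : ⟪v, xB⟫ ≠ 0 := fun h0 => hxBH (by rw [hvH]; exact h0)
      rcases lt_or_gt_of_ne hvxB with hlt | hgt
      · refine ⟨-v, fun _ => ⟨neg_ne_zero.mpr hv, ?_, ?_⟩⟩
        · rw [hvH]; ext z; simp [inner_neg_left, neg_eq_zero]
        · rw [inner_neg_left]; linarith
      · exact ⟨v, fun _ => ⟨hv, hvH, hgt⟩⟩
    · exact ⟨0, fun h => absurd h hH⟩
  choose W hWp using hWex
  have hW0 : ∀ H ∈ A, W H ≠ 0 := fun H h => (hWp H h).1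
  have hWH : ∀ H ∈ A, H = {x : (EuclideanSpace ℝ (Fin n)) | ⟪W H, x⟫ = 0} := fun H h => (hWp H h).2.1
  have hWxB : ∀ H ∈ A, 0 < ⟪W H, xB⟫ := fun H h => (hWp H h).2.2
  have hmemH : ∀ H ∈ A, ∀ x : (EuclideanSpace ℝ (Fin n)), x ∈ H ↔ ⟪W H, x⟫ = 0 := by
    intro H h x
    constructor
    · intro hx; rw [hWH H h] at hx; exact hx
    · intro hx; rw [hWH H h]; exact hx
  -- hyperplanes are closed
  have hHclosed : ∀ H ∈ A, IsClosed H := by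
    intro H h
    rw [hWH H h]
    exact isClosed_eq (continuous_const.inner continuous_id) continuous_const
  have hopen : ∀ 𝒞 : Set (Set (EuclideanSpace ℝ (Fin n))), 𝒞 ⊆ A →
      IsOpen (arrComplement 𝒞) := by
    intro 𝒞 h𝒞
    have : IsClosed (⋃ H ∈ 𝒞, H) :=
      Set.Finite.isClosed_biUnion (hAfin.subset h𝒞) (fun H hH => hHclosed H (h𝒞 hH))
    exact this.isOpen_compl
  -- interior of a region has strict signs
  have hint : ∀ 𝒞 : Set (Set (EuclideanSpace ℝ (Fin n))), 𝒞 ⊆ A →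
      ∀ x ∈ arrComplement 𝒞, ∀ H ∈ 𝒞, ∀ w : (EuclideanSpace ℝ (Fin n)), w ≠ 0 → H = {z : (EuclideanSpace ℝ (Fin n)) | ⟪w, z⟫ = 0} →
      ⟪w, x⟫ < 0 → ∀ z ∈ interior (closure (connectedComponentIn (arrComplement 𝒞) x)),
      ⟪w, z⟫ < 0 := by
    intro 𝒞 h𝒞 x hx H hH w hw hHw hwx z hz
    have hsubC : connectedComponentIn (arrComplement 𝒞) x ⊆ arrComplement 𝒞 :=
      connectedComponentIn_subset _ _
    have hnz : ∀ y ∈ connectedComponentIn (arrComplement 𝒞) x, ⟪w, y⟫ ≠ 0 := by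
      intro y hy h0
      exact (hsubC hy) (Set.mem_biUnion hH (by rw [hHw]; exact h0))
    have hneg : ∀ y ∈ connectedComponentIn (arrComplement 𝒞) x, ⟪w, y⟫ < 0 := fun y hy =>
      aux_sign_neg isPreconnected_connectedComponentIn w hnz (mem_connectedComponentIn hx) hy hwx
    have hcl : closure (connectedComponentIn (arrComplement 𝒞) x) ⊆ {y : (EuclideanSpace ℝ (Fin n)) | ⟪w, y⟫ ≤ 0} := by
      apply closure_minimal (fun y hy => le_of_lt (hneg y hy))
      exact isClosed_le (f := fun y : EuclideanSpace ℝ (Fin n) => ⟪w, y⟫) (g := fun _ => (0:ℝ))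
        (continuous_const.inner continuous_id) continuous_const
    exact aux_interior_neg w hw hcl hz
  -- points of the complement lie in the interior of their own region
  have hxint : ∀ 𝒞 : Set (Set (EuclideanSpace ℝ (Fin n))), 𝒞 ⊆ A →
      ∀ x ∈ arrComplement 𝒞,
      x ∈ interior (closure (connectedComponentIn (arrComplement 𝒞) x)) := by
    intro 𝒞 h𝒞 x hx
    have h1 : IsOpen (connectedComponentIn (arrComplement 𝒞) x) :=
      (hopen 𝒞 h𝒞).connectedComponentIn
    exact interior_maximal subset_closure h1 (mem_connectedComponentIn hx)
  have hintpos : ∀ x ∈ arrComplement A, ∀ H ∈ A, 0 < ⟪W H, x⟫ →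
      ∀ z ∈ interior (closure (connectedComponentIn (arrComplement A) x)), 0 < ⟪W H, z⟫ := by
    intro x hx H hH hpos z hz
    have hHneg : H = {z : (EuclideanSpace ℝ (Fin n)) | ⟪-(W H), z⟫ = 0} := by
      conv_lhs => rw [hWH H hH]
      ext y; simp [inner_neg_left, neg_eq_zero]
    have h := hint A subset_rfl x hx H hH (-(W H)) (neg_ne_zero.mpr (hW0 H hH))
      hHneg (by rw [inner_neg_left]; linarith) z hz
    rw [inner_neg_left] at h; linarith
  -- separation characterized by signs
  have hsep : ∀ x ∈ arrComplement A, ∀ H,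
      H ∈ sepSet A (closure (connectedComponentIn (arrComplement A) xB))
        (closure (connectedComponentIn (arrComplement A) x)) ↔
      (H ∈ A ∧ ⟪W H, x⟫ < 0) := by
    intro x hx H
    constructor
    · rintro ⟨hHA, v, hv, hvH, hpos, hneg⟩
      refine ⟨hHA, ?_⟩
      have hker : ∀ z : (EuclideanSpace ℝ (Fin n)), ⟪W H, z⟫ = 0 → ⟪v, z⟫ = 0 := by
        intro z h0
        have hzH : z ∈ H := (hmemH H hHA z).mpr h0
        rw [hvH] at hzH; exact hzH
      obtain ⟨c, hc⟩ := aux_parallel v (W H) (hW0 H hHA) hker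
      have hcne : c ≠ 0 := by rintro rfl; rw [zero_smul] at hc; exact hv hc
      have h1 : 0 < ⟪v, x⟫ := hpos x (hxint A subset_rfl x hx)
      have h2 : ⟪v, xB⟫ < 0 := hneg xB (hxint A subset_rfl xB hxB)
      rw [hc, real_inner_smul_left] at h1 h2
      have hxBpos := hWxB H hHA
      have hcneg : c < 0 := by nlinarith
      nlinarith
    · rintro ⟨hHA, hneg⟩
      refine ⟨hHA, -(W H), neg_ne_zero.mpr (hW0 H hHA), ?_, ?_, ?_⟩
      · conv_lhs => rw [hWH H hHA]
        ext z; simp [inner_neg_left, neg_eq_zero]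
      · intro z hz
        have := hint A subset_rfl x hx H hHA (W H) (hW0 H hHA) (hWH H hHA) hneg z hz
        rw [inner_neg_left]; linarith
      · intro z hz
        have := hintpos xB hxB H hHA (hWxB H hHA) z hz
        rw [inner_neg_left]; linarith
  -- positivity region Q and regions inside B₀
  have hQmem : ∀ x : (EuclideanSpace ℝ (Fin n)), (∀ G ∈ A₀, 0 < ⟪W G, x⟫) → x ∈ arrComplement A₀ := by
    intro x hxpos
    rw [arrComplement, Set.mem_compl_iff]
    intro hxmem
    obtain ⟨G, hG, hxG⟩ := Set.mem_iUnion₂.mp hxmem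
    exact (ne_of_gt (hxpos G hG)) ((hmemH G (hA₀A hG) x).mp hxG)
  have hconvQ : Convex ℝ {z : (EuclideanSpace ℝ (Fin n)) | ∀ G ∈ A₀, 0 < ⟪W G, z⟫} := by
    have hrw : {z : (EuclideanSpace ℝ (Fin n)) | ∀ G ∈ A₀, 0 < ⟪W G, z⟫} = ⋂ G ∈ A₀, {z : (EuclideanSpace ℝ (Fin n)) | 0 < ⟪W G, z⟫} := by
      ext z; simp
    rw [hrw]
    refine convex_iInter fun G => convex_iInter fun hG => ?_
    exact convex_halfSpace_gt ⟨fun a b => inner_add_right _ _ _,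
      fun c a => real_inner_smul_right _ _ _⟩ 0
  have hACsub : arrComplement A ⊆ arrComplement A₀ :=
    Set.compl_subset_compl.mpr (Set.biUnion_subset_biUnion_left hA₀A)
  have hQ : ∀ x, x ∈ arrComplement A → (∀ G ∈ A₀, 0 < ⟪W G, x⟫) →
      closure (connectedComponentIn (arrComplement A) x) ⊆
      closure (connectedComponentIn (arrComplement A₀) x₀) := by
    intro x hx hxpos
    have hQsub : {z : (EuclideanSpace ℝ (Fin n)) | ∀ G ∈ A₀, 0 < ⟪W G, z⟫} ⊆ arrComplement A₀ :=
      fun z hz => hQmem z hz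
    have hxBQ : xB ∈ {z : (EuclideanSpace ℝ (Fin n)) | ∀ G ∈ A₀, 0 < ⟪W G, z⟫} :=
      fun G hG => hWxB G (hA₀A hG)
    have hsubcomp : {z : (EuclideanSpace ℝ (Fin n)) | ∀ G ∈ A₀, 0 < ⟪W G, z⟫} ⊆
        connectedComponentIn (arrComplement A₀) xB :=
      hconvQ.isPreconnected.subset_connectedComponentIn hxBQ hQsub
    have heq1 : connectedComponentIn (arrComplement A₀) xB
        = connectedComponentIn (arrComplement A₀) x :=
      connectedComponentIn_eq (hsubcomp hxpos)
    have hxBB₀ : xB ∈ closure (connectedComponentIn (arrComplement A₀) x₀) :=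
      hBB₀ (subset_closure (mem_connectedComponentIn hxB))
    have heq0 : connectedComponentIn (arrComplement A₀) xB
        = connectedComponentIn (arrComplement A₀) x₀ :=
      aux_comp_eq (hopen A₀ hA₀A) hxBB₀ (hACsub hxB)
    calc closure (connectedComponentIn (arrComplement A) x)
        ⊆ closure (connectedComponentIn (arrComplement A₀) x) :=
          closure_mono (connectedComponentIn_mono x hACsub)
      _ = closure (connectedComponentIn (arrComplement A₀) x₀) := by rw [← heq1, heq0]
  -- spans of arrangements
  have horth : ∀ 𝒞 : Set (Set (EuclideanSpace ℝ (Fin n))), 𝒞 ⊆ A →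
      arrSpan 𝒞 = Submodule.span ℝ (W '' 𝒞) := by
    intro 𝒞 h𝒞
    have hs : ⋂₀ 𝒞 = ((Submodule.span ℝ (W '' 𝒞))ᗮ : Set (EuclideanSpace ℝ (Fin n))) := by
      ext x
      simp only [Set.mem_sInter, SetLike.mem_coe]
      constructor
      · intro hx
        rw [Submodule.mem_orthogonal]
        intro u hu
        induction hu using Submodule.span_induction with
        | mem v hv => obtain ⟨H, hH, rfl⟩ := hv; exact (hmemH H (h𝒞 hH) x).mp (hx H hH)
        | zero => exact inner_zero_left x
        | add a b _ _ ha hb => rw [inner_add_left, ha, hb, add_zero]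
        | smul c a _ ha => rw [real_inner_smul_left, ha, mul_zero]
      · intro hx H hH
        refine (hmemH H (h𝒞 hH) x).mpr ?_
        exact (Submodule.mem_orthogonal _ x).mp hx (W H) (Submodule.subset_span ⟨H, hH, rfl⟩)
    rw [arrSpan, hs, Submodule.span_eq, Submodule.orthogonal_orthogonal]
  -- equal zero sets give equal hyperplanes
  have hWeq : ∀ K ∈ A, ∀ K' ∈ A, ∀ c : ℝ, W K = c • W K' → K = K' := by
    intro K hK K' hK' c hc
    have hcne : c ≠ 0 := by rintro rfl; rw [zero_smul] at hc; exact absurd hc (hW0 K hK)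
    rw [hWH K hK, hWH K' hK']
    ext z
    simp only [Set.mem_setOf_eq, hc, real_inner_smul_left]
    constructor
    · intro h0; rcases mul_eq_zero.mp h0 with h | h
      · exact absurd h hcne
      · exact h
    · intro h0; rw [h0, mul_zero]
  -- no A₁ normal lies in the span of the A₀ normals
  have hstar : ∀ H ∈ A₁, W H ∉ Submodule.span ℝ (W '' A₀) := by
    have hex : ∃ H'' ∈ A₁, W H'' ∉ Submodule.span ℝ (W '' A₀) := by
      by_contra hall
      push_neg at hall
      have hle : Submodule.span ℝ (W '' A) ≤ Submodule.span ℝ (W '' A₀) := by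
        rw [Submodule.span_le]
        rintro v ⟨H, hH, rfl⟩
        rw [hpart] at hH
        rcases hH with hH | hH
        · exact Submodule.subset_span ⟨H, hH, rfl⟩
        · exact hall H hH
      have h1 : arrRank A ≤ arrRank A₀ := by
        rw [arrRank, arrRank, horth A subset_rfl, horth A₀ hA₀A]
        exact Submodule.finrank_mono hle
      omega
    intro H hH hmemV
    obtain ⟨H'', hH'', hne''⟩ := hex
    have hneq : H ≠ H'' := by rintro rfl; exact hne'' hmemV
    obtain ⟨G, ⟨hG₀, hGsub⟩, -⟩ := hmod H hH H'' hH'' hneq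
    have hGA := hA₀A hG₀
    obtain ⟨a, b, hab⟩ : ∃ a b : ℝ, W G = a • W H + b • W H'' := by
      apply aux_span_pair
      intro x hx1 hx2
      exact (hmemH G hGA x).mp (hGsub ⟨(hmemH H (hA₁A hH) x).mpr hx1,
        (hmemH H'' (hA₁A hH'') x).mpr hx2⟩)
    by_cases hb : b = 0
    · subst hb
      rw [zero_smul, add_zero] at hab
      have hGH : G = H := hWeq G hGA H (hA₁A hH) a hab
      exact Set.disjoint_left.mp hdisj (hGH ▸ hG₀) hH
    · apply hne''
      have hrw : W H'' = (1/b) • (W G - a • W H) := by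
        rw [hab, add_sub_cancel_left, smul_smul, one_div_mul_cancel hb, one_smul]
      rw [hrw]
      exact Submodule.smul_mem _ _ (Submodule.sub_mem _
        (Submodule.subset_span ⟨G, hG₀, rfl⟩)
        (Submodule.smul_mem _ _ hmemV))
  -- from a solvable strict system, get a solution in the complement
  have hfind : ∀ S : Finset (EuclideanSpace ℝ (Fin n)), (∃ x : (EuclideanSpace ℝ (Fin n)), ∀ z ∈ S, 0 < ⟪z, x⟫) →
      ∃ x : (EuclideanSpace ℝ (Fin n)), x ∈ arrComplement A ∧ ∀ z ∈ S, 0 < ⟪z, x⟫ := by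
    rintro S ⟨x₁, hx₁⟩
    set U : Set (EuclideanSpace ℝ (Fin n)) := ⋂ z ∈ S, {y : (EuclideanSpace ℝ (Fin n)) | 0 < ⟪z, y⟫} with hU
    have hUopen : IsOpen U := isOpen_biInter_finset fun z _ =>
      isOpen_lt continuous_const (continuous_const.inner continuous_id)
    have hx₁U : x₁ ∈ U := by
      simp only [hU, Set.mem_iInter]; exact fun z hz => hx₁ z hz
    obtain ⟨y, hyU, hy⟩ := aux_generic (hAfin.toFinset.image W)
      (by rintro v hv
          obtain ⟨K, hK, rfl⟩ := Finset.mem_image.mp hv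
          exact hW0 K (hAfin.mem_toFinset.mp hK)) U hUopen ⟨x₁, hx₁U⟩
    refine ⟨y, ?_, ?_⟩
    · rw [arrComplement, Set.mem_compl_iff]
      intro hymem
      obtain ⟨K, hK, hyK⟩ := Set.mem_iUnion₂.mp hymem
      exact hy (W K) (Finset.mem_image_of_mem W (hAfin.mem_toFinset.mpr hK))
        ((hmemH K hK y).mp hyK)
    · intro z hz
      simp only [hU, Set.mem_iInter] at hyU
      exact hyU z hz
  have hA₀fin := hAfin.subset hA₀A
  have himgpos : ∀ z ∈ hA₀fin.toFinset.image W, 0 < ⟪z, xB⟫ := by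
    intro z hz
    obtain ⟨G, hG, rfl⟩ := Finset.mem_image.mp hz
    exact hWxB G (hA₀A (hA₀fin.mem_toFinset.mp hG))
  have himgspan : ∀ (c : (EuclideanSpace ℝ (Fin n)) → ℝ), (∑ z ∈ hA₀fin.toFinset.image W, c z • z) ∈
      Submodule.span ℝ (W '' A₀) := by
    intro c
    apply Submodule.sum_mem
    intro z hz
    obtain ⟨G, hG, rfl⟩ := Finset.mem_image.mp hz
    exact Submodule.smul_mem _ _ (Submodule.subset_span ⟨G, hA₀fin.mem_toFinset.mp hG, rfl⟩)
  have hnegni : ∀ H ∈ A₁, -(W H) ∉ hA₀fin.toFinset.image W := by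
    intro H hH hmem
    obtain ⟨G, hG, hGW⟩ := Finset.mem_image.mp hmem
    have hG₀ : G ∈ A₀ := hA₀fin.mem_toFinset.mp hG
    have hHG : H = G := hWeq H (hA₁A hH) G (hA₀A hG₀) (-1)
      (by rw [neg_one_smul, hGW, neg_neg])
    have hH₀ : H ∈ A₀ := by rw [hHG]; exact hG₀
    exact Set.disjoint_left.mp hdisj hH₀ hH
  -- every A₁ hyperplane is crossed by some region inside B₀
  have hfeas : ∀ H ∈ A₁, ∃ x : (EuclideanSpace ℝ (Fin n)), x ∈ arrComplement A ∧ (∀ G ∈ A₀, 0 < ⟪W G, x⟫) ∧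
      ⟪W H, x⟫ < 0 := by
    intro H hH
    have hsol : ∃ x : (EuclideanSpace ℝ (Fin n)), ∀ z ∈ insert (-(W H)) (hA₀fin.toFinset.image W), 0 < ⟪z, x⟫ := by
      by_contra hinf
      obtain ⟨c, hc0, hcsum, hc1⟩ := aux_gordan _ hinf
      rw [Finset.sum_insert (hnegni H hH)] at hcsum hc1
      have hinner : c (-(W H)) * ⟪-(W H), xB⟫ +
          ∑ z ∈ hA₀fin.toFinset.image W, c z * ⟪z, xB⟫ = 0 := by
        have h := congrArg (fun v : (EuclideanSpace ℝ (Fin n)) => ⟪v, xB⟫) hcsum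
        simp only [inner_add_left, sum_inner, real_inner_smul_left, inner_zero_left] at h
        exact h
      by_cases ht : c (-(W H)) = 0
      · rw [ht, zero_mul, zero_add] at hinner
        have hz0 := (Finset.sum_eq_zero_iff_of_nonneg (fun z hz =>
          mul_nonneg (hc0 z) (le_of_lt (himgpos z hz)))).mp hinner
        have hcz : ∀ z ∈ hA₀fin.toFinset.image W, c z = 0 := fun z hz =>
          (mul_eq_zero.mp (hz0 z hz)).resolve_right (ne_of_gt (himgpos z hz))
        rw [ht, Finset.sum_eq_zero hcz] at hc1
        norm_num at hc1
      · have htpos : 0 < c (-(W H)) := lt_of_le_of_ne (hc0 _) (Ne.symm ht)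
        apply hstar H hH
        have h2 : c (-(W H)) • W H = ∑ z ∈ hA₀fin.toFinset.image W, c z • z := by
          rw [smul_neg, neg_add_eq_zero] at hcsum
          exact hcsum
        have hWHeq : W H = (1 / c (-(W H))) • ∑ z ∈ hA₀fin.toFinset.image W, c z • z := by
          rw [← h2, smul_smul, one_div_mul_cancel ht, one_smul]
        rw [hWHeq]
        exact Submodule.smul_mem _ _ (himgspan c)
    obtain ⟨x, hxc, hxS⟩ := hfind _ hsol
    refine ⟨x, hxc, ?_, ?_⟩
    · intro G hG
      exact hxS (W G) (Finset.mem_insert_of_mem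
        (Finset.mem_image_of_mem W (hA₀fin.mem_toFinset.mpr hG)))
    · have h := hxS (-(W H)) (Finset.mem_insert_self _ _)
      rw [inner_neg_left] at h; linarith
  -- span of a hyperplane equals the hyperplane
  have hkerset : ∀ w : (EuclideanSpace ℝ (Fin n)), (((ℝ ∙ w)ᗮ : Submodule ℝ (EuclideanSpace ℝ (Fin n))) : Set (EuclideanSpace ℝ (Fin n))) = {x : (EuclideanSpace ℝ (Fin n)) | ⟪w, x⟫ = 0} := by
    intro w
    ext x
    simp only [SetLike.mem_coe, Set.mem_setOf_eq]
    constructor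
    · intro hx
      exact (Submodule.mem_orthogonal _ x).mp hx w (Submodule.mem_span_singleton_self w)
    · intro hx
      rw [Submodule.mem_orthogonal]
      intro u hu
      obtain ⟨c, rfl⟩ := Submodule.mem_span_singleton.mp hu
      rw [real_inner_smul_left, hx, mul_zero]
  have hspanset : ∀ K ∈ A, (Submodule.span ℝ K : Set (EuclideanSpace ℝ (Fin n))) = K := by
    intro K hK
    have h1 : K = (((ℝ ∙ W K)ᗮ : Submodule ℝ (EuclideanSpace ℝ (Fin n))) : Set (EuclideanSpace ℝ (Fin n))) := by
      rw [hkerset]; exact hWH K hK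
    rw [h1, Submodule.span_eq]
  -- the crossing sets
  set fset : Set (EuclideanSpace ℝ (Fin n)) → Set (EuclideanSpace ℝ (Fin n)) := fun H =>
    {x : (EuclideanSpace ℝ (Fin n)) | (x ∈ arrComplement A ∧ ∀ G ∈ A₀, 0 < ⟪W G, x⟫) ∧ ⟪W H, x⟫ < 0} with hfsetdef
  have hnested : ∀ H ∈ A₁, ∀ H' ∈ A₁, fset H ⊆ fset H' ∨ fset H' ⊆ fset H := by
    intro H hH H' hH'
    by_contra hcon
    push_neg at hcon
    obtain ⟨hns1, hns2⟩ := hcon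
    obtain ⟨x, hxmem, hxnot⟩ := Set.not_subset.mp hns1
    obtain ⟨y, hymem, hynot⟩ := Set.not_subset.mp hns2
    obtain ⟨⟨hxc, hxpos⟩, hxH⟩ := hxmem
    obtain ⟨⟨hyc, hypos⟩, hyH'⟩ := hymem
    have hxH' : ¬ ⟪W H', x⟫ < 0 := fun hlt => hxnot ⟨⟨hxc, hxpos⟩, hlt⟩
    have hyH : ¬ ⟪W H, y⟫ < 0 := fun hlt => hynot ⟨⟨hyc, hypos⟩, hlt⟩
    rcases hchain (closure (connectedComponentIn (arrComplement A) x))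
      (closure (connectedComponentIn (arrComplement A) y))
      ⟨x, hxc, rfl⟩ ⟨y, hyc, rfl⟩ (hQ x hxc hxpos) (hQ y hyc hypos) with hle | hle
    · exact hyH ((hsep y hyc H).mp (hle ((hsep x hxc H).mpr ⟨hA₁A hH, hxH⟩))).2
    · exact hxH' ((hsep x hxc H').mp (hle ((hsep y hyc H').mpr ⟨hA₁A hH', hyH'⟩))).2
  -- basic edges strictly decrease the crossing set
  have hedge : ∀ H H' : Set (EuclideanSpace ℝ (Fin n)), H ∈ A₁ → H' ∈ A₁ →
      BasicEdge A (closure (connectedComponentIn (arrComplement A) xB)) H H' →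
      fset H' ⊂ fset H := by
    intro H H' hH hH' hBE
    obtain ⟨hHA, hH'A, hne, hbasic⟩ := hBE
    obtain ⟨G, ⟨hG₀, hGsub⟩, -⟩ := hmod H hH H' hH' hne
    have hGA := hA₀A hG₀
    obtain ⟨a, b, hab⟩ : ∃ a b : ℝ, W G = a • W H + b • W H' := by
      apply aux_span_pair
      intro x hx1 hx2
      exact (hmemH G hGA x).mp (hGsub ⟨(hmemH H hHA x).mpr hx1, (hmemH H' hH'A x).mpr hx2⟩)
    obtain ⟨hHP, B', hB'reg, hBB', hspan⟩ := hbasic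
    obtain ⟨x', hx', hB'def⟩ := hB'reg
    have hPA : pencil A H H' ⊆ A := fun K hK => hK.1
    have hxBP : xB ∈ arrComplement (pencil A H H') := by
      apply Set.compl_subset_compl.mpr (Set.biUnion_subset_biUnion_left hPA)
      exact hxB
    have hxBB' : xB ∈ B' := hBB' (subset_closure (mem_connectedComponentIn hxB))
    have hcompeq : connectedComponentIn (arrComplement (pencil A H H')) xB
        = connectedComponentIn (arrComplement (pencil A H H')) x' := by
      apply aux_comp_eq (hopen _ hPA) _ hxBP
      rw [← hB'def]; exact hxBB'
    have hB'pos : ∀ K ∈ pencil A H H', ∀ z ∈ B', 0 ≤ ⟪W K, z⟫ := by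
      intro K hK z hz
      have hKA := hPA hK
      have hcpos : ∀ y ∈ connectedComponentIn (arrComplement (pencil A H H')) xB,
          0 < ⟪W K, y⟫ := by
        intro y hy
        have hnz : ∀ y' ∈ connectedComponentIn (arrComplement (pencil A H H')) xB,
            ⟪-(W K), y'⟫ ≠ 0 := by
          intro y' hy' h0
          rw [inner_neg_left, neg_eq_zero] at h0
          exact (connectedComponentIn_subset _ _ hy')
            (Set.mem_biUnion hK ((hmemH K hKA y').mpr h0))
        have h := aux_sign_neg isPreconnected_connectedComponentIn (-(W K)) hnz
          (mem_connectedComponentIn hxBP) hy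
          (by rw [inner_neg_left]; linarith [hWxB K hKA])
        rw [inner_neg_left] at h; linarith
      have hcl : B' ⊆ {y : (EuclideanSpace ℝ (Fin n)) | 0 ≤ ⟪W K, y⟫} := by
        rw [hB'def, ← hcompeq]
        apply closure_minimal (fun y hy => le_of_lt (hcpos y hy))
        exact isClosed_le (f := fun _ => (0:ℝ)) (g := fun y : EuclideanSpace ℝ (Fin n) => ⟪W K, y⟫)
          continuous_const (continuous_const.inner continuous_id)
      exact hcl hz
    have hH'P : H' ∈ pencil A H H' := ⟨hH'A, Set.inter_subset_right⟩
    have hGP : G ∈ pencil A H H' := ⟨hGA, hGsub⟩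
    -- a point p of H ∩ B' outside H'
    have hps : ¬ (H ∩ B' ⊆ H') := by
      intro hsub
      have hle : Submodule.span ℝ H ≤ Submodule.span ℝ H' := by
        rw [← hspan]
        exact Submodule.span_mono hsub
      have hHH' : H ⊆ H' := by
        intro x hxH
        have hx1 : x ∈ Submodule.span ℝ H' := hle (Submodule.subset_span hxH)
        rw [← hspanset H' hH'A]
        exact hx1
      obtain ⟨c, hc⟩ := aux_parallel (W H') (W H) (hW0 H hHA) (fun z hz =>
        (hmemH H' hH'A z).mp (hHH' ((hmemH H hHA z).mpr hz)))
      exact hne (hWeq H' hH'A H hHA c hc).symm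
    obtain ⟨p, hpHB', hpH'⟩ := Set.not_subset.mp hps
    obtain ⟨hpH, hpB'⟩ := hpHB'
    have hpH0 : ⟪W H, p⟫ = 0 := (hmemH H hHA p).mp hpH
    have hpH'pos : 0 < ⟪W H', p⟫ :=
      lt_of_le_of_ne (hB'pos H' hH'P p hpB')
        (fun h0 => hpH' ((hmemH H' hH'A p).mpr h0.symm))
    have hGp : ⟪W G, p⟫ = b * ⟪W H', p⟫ := by
      rw [hab, inner_add_left, real_inner_smul_left, real_inner_smul_left, hpH0,
        mul_zero, zero_add]
    have hbne : b ≠ 0 := by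
      rintro rfl
      rw [zero_smul, add_zero] at hab
      have hGH : G = H := hWeq G hGA H hHA a hab
      exact Set.disjoint_left.mp hdisj hG₀ (by rw [hGH]; exact hH)
    have hbpos : 0 < b := by
      rcases lt_trichotomy b 0 with hb | hb | hb
      · exfalso
        have h := hB'pos G hGP p hpB'
        rw [hGp] at h
        nlinarith
      · exact absurd hb hbne
      · exact hb
    have hane : a ≠ 0 := by
      rintro rfl
      rw [zero_smul, zero_add] at hab
      have hGH : G = H' := hWeq G hGA H' hH'A b hab
      exact Set.disjoint_left.mp hdisj hG₀ (by rw [hGH]; exact hH')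
    have haneg : a < 0 := by
      rcases lt_trichotomy a 0 with h | h | h
      · exact h
      · exact absurd h hane
      · exfalso
        have hdisjf : ∀ x : (EuclideanSpace ℝ (Fin n)), x ∈ fset H → x ∈ fset H' → False := by
          rintro x ⟨⟨hxc, hxpos⟩, hxH⟩ ⟨-, hxH'⟩
          have hxG : 0 < ⟪W G, x⟫ := hxpos G hG₀
          rw [hab, inner_add_left, real_inner_smul_left, real_inner_smul_left] at hxG
          nlinarith
        obtain ⟨xh, hxh1, hxh2, hxh3⟩ := hfeas H hH
        obtain ⟨xh', hxh'1, hxh'2, hxh'3⟩ := hfeas H' hH'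
        rcases hnested H hH H' hH' with hss | hss
        · exact hdisjf xh ⟨⟨hxh1, hxh2⟩, hxh3⟩ (hss ⟨⟨hxh1, hxh2⟩, hxh3⟩)
        · exact hdisjf xh' (hss ⟨⟨hxh'1, hxh'2⟩, hxh'3⟩) ⟨⟨hxh'1, hxh'2⟩, hxh'3⟩
    have hsub : fset H' ⊆ fset H := by
      rintro x ⟨⟨hxc, hxpos⟩, hxH'⟩
      refine ⟨⟨hxc, hxpos⟩, ?_⟩
      have hxG : 0 < ⟪W G, x⟫ := hxpos G hG₀
      rw [hab, inner_add_left, real_inner_smul_left, real_inner_smul_left] at hxG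
      nlinarith
    -- strictness
    have hstrict : ∃ x : (EuclideanSpace ℝ (Fin n)), x ∈ fset H ∧ x ∉ fset H' := by
      have hH'ni : W H' ∉ insert (-(W H)) (hA₀fin.toFinset.image W) := by
        intro hmem
        rcases Finset.mem_insert.mp hmem with heq | hmem
        · have hHH : H' = H := hWeq H' hH'A H hHA (-1) (by rw [neg_one_smul]; exact heq)
          exact hne hHH.symm
        · obtain ⟨G', hG', hGW⟩ := Finset.mem_image.mp hmem
          have hG'₀ : G' ∈ A₀ := hA₀fin.mem_toFinset.mp hG'
          have hHG : H' = G' := hWeq H' hH'A G' (hA₀A hG'₀) 1 (by rw [one_smul]; exact hGW.symm)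
          exact Set.disjoint_left.mp hdisj (by rw [← hHG] at hG'₀; exact hG'₀) hH'
      have hsol : ∃ x : (EuclideanSpace ℝ (Fin n)), ∀ z ∈ insert (W H') (insert (-(W H)) (hA₀fin.toFinset.image W)),
          0 < ⟪z, x⟫ := by
        by_contra hinf
        obtain ⟨c, hc0, hcsum, hc1⟩ := aux_gordan _ hinf
        rw [Finset.sum_insert hH'ni, Finset.sum_insert (hnegni H hH)] at hcsum
        rw [Finset.sum_insert hH'ni, Finset.sum_insert (hnegni H hH)] at hc1
        set t := c (-(W H)) with hts
        set t' := c (W H') with hts'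
        have hinner : t' * ⟪W H', xB⟫ + (t * ⟪-(W H), xB⟫ +
            ∑ z ∈ hA₀fin.toFinset.image W, c z * ⟪z, xB⟫) = 0 := by
          have h := congrArg (fun v : (EuclideanSpace ℝ (Fin n)) => ⟪v, xB⟫) hcsum
          simp only [inner_add_left, sum_inner, real_inner_smul_left, inner_zero_left] at h
          exact h
        have hterms : ∀ z ∈ hA₀fin.toFinset.image W, 0 ≤ c z * ⟪z, xB⟫ := fun z hz =>
          mul_nonneg (hc0 z) (le_of_lt (himgpos z hz))
        have hsumnn : 0 ≤ ∑ z ∈ hA₀fin.toFinset.image W, c z * ⟪z, xB⟫ :=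
          Finset.sum_nonneg hterms
        by_cases ht : t = 0
        · rw [ht, zero_mul, zero_add] at hinner
          have ht'0 : t' = 0 := by nlinarith [hWxB H' hH'A, hc0 (W H')]
          have hsum0 : ∑ z ∈ hA₀fin.toFinset.image W, c z * ⟪z, xB⟫ = 0 := by
            rw [ht'0, zero_mul, zero_add] at hinner
            exact hinner
          have hcz : ∀ z ∈ hA₀fin.toFinset.image W, c z = 0 := fun z hz =>
            (mul_eq_zero.mp ((Finset.sum_eq_zero_iff_of_nonneg hterms).mp
              hsum0 z hz)).resolve_right (ne_of_gt (himgpos z hz))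
          rw [ht'0, ht, Finset.sum_eq_zero hcz] at hc1
          norm_num at hc1
        · have htpos : 0 < t := lt_of_le_of_ne (hc0 _) (Ne.symm ht)
          have h2 : t • W H = t' • W H' + ∑ z ∈ hA₀fin.toFinset.image W, c z • z := by
            rw [smul_neg] at hcsum
            have h4 : t • W H - (t' • W H' + ∑ z ∈ hA₀fin.toFinset.image W, c z • z)
                = -(t' • W H' + (-(t • W H) + ∑ z ∈ hA₀fin.toFinset.image W, c z • z)) := by
              abel
            rw [hcsum, neg_zero] at h4
            exact sub_eq_zero.mp h4
          have hu : W H = ((1/t) * t') • W H' +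
              (1/t) • ∑ z ∈ hA₀fin.toFinset.image W, c z • z := by
            have h := congrArg (fun v : (EuclideanSpace ℝ (Fin n)) => (1/t) • v) h2
            simp only [smul_add, smul_smul] at h
            rw [one_div_mul_cancel ht, one_smul] at h
            exact h
          -- combine with the pencil relation
          have hcomb : W G - (a • ((1/t) • ∑ z ∈ hA₀fin.toFinset.image W, c z • z))
              = (a * ((1/t) * t') + b) • W H' := by
            rw [hab, hu]
            rw [smul_add, smul_smul, add_smul]
            abel
          by_cases hγ : a * ((1/t) * t') + b = 0
          · rw [hγ, zero_smul, sub_eq_zero] at hcomb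
            have hGxB : ⟪W G, xB⟫ = a * ((1/t) *
                ∑ z ∈ hA₀fin.toFinset.image W, c z * ⟪z, xB⟫) := by
              have h := congrArg (fun v : (EuclideanSpace ℝ (Fin n)) => ⟪v, xB⟫) hcomb
              simp only [real_inner_smul_left, sum_inner] at h
              exact h
            have hGpos := hWxB G hGA
            have h1t : 0 < 1/t := by positivity
            nlinarith [mul_nonneg h1t.le hsumnn]
          · apply hstar H' hH'
            have hH'eq : W H' = (1 / (a * ((1/t) * t') + b)) •
                (W G - (a • ((1/t) • ∑ z ∈ hA₀fin.toFinset.image W, c z • z))) := by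
              rw [hcomb, smul_smul, one_div_mul_cancel hγ, one_smul]
            rw [hH'eq]
            apply Submodule.smul_mem
            apply Submodule.sub_mem
            · exact Submodule.subset_span ⟨G, hG₀, rfl⟩
            · exact Submodule.smul_mem _ _ (Submodule.smul_mem _ _ (himgspan c))
      obtain ⟨x, hxc, hxS⟩ := hfind _ hsol
      refine ⟨x, ⟨⟨hxc, ?_⟩, ?_⟩, ?_⟩
      · intro G' hG'
        exact hxS (W G') (Finset.mem_insert_of_mem (Finset.mem_insert_of_mem
          (Finset.mem_image_of_mem W (hA₀fin.mem_toFinset.mpr hG'))))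
      · have h := hxS (-(W H)) (Finset.mem_insert_of_mem (Finset.mem_insert_self _ _))
        rw [inner_neg_left] at h; linarith
      · intro hxmem
        have h := hxS (W H') (Finset.mem_insert_self _ _)
        exact absurd hxmem.2 (by linarith)
    obtain ⟨x, hxfH, hxnfH'⟩ := hstrict
    rw [Set.ssubset_def]
    exact ⟨hsub, fun hcontra => hxnfH' (hcontra hxfH)⟩
  -- conclude: no cycles
  have hkey : ∀ K K' : Set (EuclideanSpace ℝ (Fin n)), Relation.TransGen
      (fun H₁ H₂ => H₁ ∈ A₁ ∧ H₂ ∈ A₁ ∧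
        BasicEdge A (closure (connectedComponentIn (arrComplement A) xB)) H₁ H₂) K K' →
      fset K' ⊂ fset K := by
    intro K K' h
    induction h with
    | single h => exact hedge _ _ h.1 h.2.1 h.2.2
    | tail _ h ih => exact ssubset_of_ssubset_of_subset (hedge _ _ h.1 h.2.1 h.2.2) ih.subset
  exact absurd (hkey Hcyc Hcyc hcyc) (ssubset_irrefl _)
end
end
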